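/- Explicit divergence of θ and the gradient property (Lemma B.1(6)): let d ≥ 2 and A, B, C ∈ ℝ with C ≥ 0, B ≤ A < 2B and A + C ≥ 2, and let θ be as defined below. Then for every x ∈ (0,∞)^d and every i ∈ {1,…,d}: Σ_{j=1}^d ∂_j θ_{ij}(x) = (A+C) ( x_i^{A+C−1} ∏_{l≠i} x_l^C + x_i^{A+C} Σ_{j≠i} x_j^{A+C−1} ∏_{l≠i,j} x_l^{A+C−B} ), and moreover Σ_{j=1}^d θ_{ij}(x) · (A+C)/x_j = Σ_{j=1}^d ∂_j θ_{ij}(x); that is, θ(x)⁻¹ (div θ)(x) equals the gradient of H(x) = (A+C) Σ_{l=1}^d log x_l. -/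

import Mathlib

/-- The matrix-valued function `θ` of Lemma B.1. -/
noncomputable def thetaMat (d : ℕ) (A B C : ℝ) (x : Fin d → ℝ) :
    Matrix (Fin d) (Fin d) ℝ :=
  fun i j => if i = j then x i ^ A * ∏ l, x l ^ C
    else x i ^ B * x j ^ B * ∏ l, x l ^ (A + C - B)

lemma prod_rpow_fderiv {d : ℕ} (e : Fin d → ℝ) (x : Fin d → ℝ) (hx : ∀ l, 0 < x l)
    (j : Fin d) :
    fderiv ℝ (fun y : Fin d → ℝ => ∏ l, y l ^ e l) x (Pi.single j 1)
      = e j / x j * ∏ l, x l ^ e l := by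
  have h : ∀ l ∈ Finset.univ, HasFDerivAt (fun y : Fin d → ℝ => y l ^ e l)
      ((e l * x l ^ (e l - 1)) • (ContinuousLinearMap.proj l : (Fin d → ℝ) →L[ℝ] ℝ)) x := by
    intro l _
    exact (Real.hasDerivAt_rpow_const (p := e l) (Or.inl (hx l).ne')).comp_hasFDerivAt x
      (hasFDerivAt_apply (𝕜 := ℝ) l x)
  have H := HasFDerivAt.finset_prod h
  rw [H.fderiv]
  simp only [ContinuousLinearMap.sum_apply, ContinuousLinearMap.smul_apply,
    ContinuousLinearMap.proj_apply, smul_eq_mul]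
  rw [Finset.sum_eq_single j]
  · rw [Pi.single_eq_same, Real.rpow_sub_one (hx j).ne',
      ← Finset.mul_prod_erase Finset.univ _ (Finset.mem_univ j)]
    field_simp
  · intro b _ hb
    rw [Pi.single_eq_of_ne hb]
    simp
  · simp

/-- Exponents of the monomial form of `thetaMat`. -/
def thetaExp (A B C : ℝ) {d : ℕ} (i j l : Fin d) : ℝ :=
  if i = j then C + (if l = i then A else 0)
  else (A + C - B) + (if l = i then B else 0) + (if l = j then B else 0)

lemma thetaExp_snd {d : ℕ} (A B C : ℝ) (i j : Fin d) : thetaExp A B C i j j = A + C := by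
  unfold thetaExp
  by_cases h : i = j
  · subst h; simp [add_comm]
  · rw [if_neg h, if_neg fun hji => h hji.symm, if_pos rfl]; ring

lemma theta_eq_prod {d : ℕ} (A B C : ℝ) (i j : Fin d) (y : Fin d → ℝ)
    (hy : ∀ l, 0 < y l) :
    thetaMat d A B C y i j = ∏ l, y l ^ thetaExp A B C i j l := by
  unfold thetaMat thetaExp
  have hA : ∀ (a : ℝ) (m : Fin d), (∏ l, y l ^ (if l = m then a else 0)) = y m ^ a := by
    intro a m
    rw [Finset.prod_eq_single m (fun b _ hb => by rw [if_neg hb, Real.rpow_zero])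
      (by simp), if_pos rfl]
  by_cases h : i = j
  · simp only [if_pos h]
    calc y i ^ A * ∏ l, y l ^ C
        = (∏ l, y l ^ C) * ∏ l, y l ^ (if l = i then A else 0) := by rw [hA]; ring
      _ = ∏ l, y l ^ C * y l ^ (if l = i then A else 0) := by rw [Finset.prod_mul_distrib]
      _ = _ := Finset.prod_congr rfl fun l _ => (Real.rpow_add (hy l) _ _).symm
  · simp only [if_neg h]
    calc y i ^ B * y j ^ B * ∏ l, y l ^ (A + C - B)
        = ((∏ l, y l ^ (A + C - B)) * ∏ l, y l ^ (if l = i then B else 0)) *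
            ∏ l, y l ^ (if l = j then B else 0) := by rw [hA, hA]; ring
      _ = ∏ l, y l ^ (A + C - B) * y l ^ (if l = i then B else 0) *
            y l ^ (if l = j then B else 0) := by
              simp only [Finset.prod_mul_distrib]
      _ = _ := Finset.prod_congr rfl fun l _ => by
            rw [Real.rpow_add (hy l), Real.rpow_add (hy l)]

lemma theta_fderiv {d : ℕ} (A B C : ℝ) (x : Fin d → ℝ) (hx : ∀ l, 0 < x l) (i j : Fin d) :
    fderiv ℝ (fun y => thetaMat d A B C y i j) x (Pi.single j 1)
      = (A + C) / x j * thetaMat d A B C x i j := by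
  have hpos : ∀ᶠ y in nhds x, ∀ l, 0 < y l := by
    rw [Filter.eventually_all]
    intro l
    exact Filter.eventually_of_mem
      ((isOpen_lt continuous_const (continuous_apply l)).mem_nhds (hx l)) fun y hy => hy
  have hev : (fun y => thetaMat d A B C y i j)
      =ᶠ[nhds x] fun y => ∏ l, y l ^ thetaExp A B C i j l :=
    hpos.mono fun y hy => theta_eq_prod A B C i j y hy
  rw [hev.fderiv_eq, prod_rpow_fderiv _ x hx j, ← theta_eq_prod A B C i j x hx,
    thetaExp_snd]

/-- Explicit divergence of `θ` and the gradient property (Lemma B.1(6)):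
`(div θ)_i` has the displayed explicit form, `θ(x)·((A+C)/x_·) = (div θ)(x)`,
and `(A+C)/x_k` is the gradient of `H(x) = (A+C) Σ_l log x_l`. -/
theorem thetaMat_divergence_gradient (d : ℕ) (hd : 2 ≤ d) (A B C : ℝ)
    (hC : 0 ≤ C) (hBA : B ≤ A) (hA2B : A < 2 * B) (hAC : 2 ≤ A + C)
    (x : Fin d → ℝ) (hx : ∀ l, 0 < x l) (i : Fin d) :
    (∑ j, fderiv ℝ (fun y => thetaMat d A B C y i j) x (Pi.single j 1)
      = (A + C) * (x i ^ (A + C - 1) * ∏ l ∈ Finset.univ.erase i, x l ^ C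
        + x i ^ (A + C) * ∑ j ∈ Finset.univ.erase i, x j ^ (A + C - 1) *
            ∏ l ∈ (Finset.univ.erase i).erase j, x l ^ (A + C - B))) ∧
    (∑ j, thetaMat d A B C x i j * ((A + C) / x j)
      = ∑ j, fderiv ℝ (fun y => thetaMat d A B C y i j) x (Pi.single j 1)) ∧
    (∀ k : Fin d, fderiv ℝ (fun y => (A + C) * ∑ l, Real.log (y l)) x (Pi.single k 1)
      = (A + C) / x k) := by
  have hderiv : ∀ j, fderiv ℝ (fun y => thetaMat d A B C y i j) x (Pi.single j 1)
      = (A + C) / x j * thetaMat d A B C x i j := theta_fderiv A B C x hx i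
  refine ⟨?_, ?_, ?_⟩
  · rw [Finset.sum_congr rfl fun j _ => hderiv j,
      ← Finset.add_sum_erase Finset.univ _ (Finset.mem_univ i)]
    have hdiag : (A + C) / x i * thetaMat d A B C x i i
        = (A + C) * (x i ^ (A + C - 1) * ∏ l ∈ Finset.univ.erase i, x l ^ C) := by
      unfold thetaMat
      rw [if_pos rfl, ← Finset.mul_prod_erase Finset.univ (fun l => x l ^ C)
        (Finset.mem_univ i), Real.rpow_sub_one (hx i).ne',
        Real.rpow_add (hx i) A C]
      field_simp
    have hoff : ∀ j ∈ Finset.univ.erase i,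
        (A + C) / x j * thetaMat d A B C x i j
          = (A + C) * (x i ^ (A + C) * (x j ^ (A + C - 1) *
              ∏ l ∈ (Finset.univ.erase i).erase j, x l ^ (A + C - B))) := by
      intro j hj
      have hji : j ≠ i := Finset.ne_of_mem_erase hj
      unfold thetaMat
      rw [if_neg (fun h => hji h.symm),
        ← Finset.mul_prod_erase Finset.univ (fun l => x l ^ (A + C - B)) (Finset.mem_univ i),
        ← Finset.mul_prod_erase _ (fun l => x l ^ (A + C - B))
          (Finset.mem_erase.2 ⟨hji, Finset.mem_univ j⟩)]
      have e1 : x i ^ (A + C) = x i ^ B * x i ^ (A + C - B) := by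
        rw [← Real.rpow_add (hx i)]; congr 1; ring
      have e2 : (x j : ℝ) ^ (A + C) = x j ^ B * x j ^ (A + C - B) := by
        rw [← Real.rpow_add (hx j)]; congr 1; ring
      rw [Real.rpow_sub_one (hx j).ne', e1, e2]
      field_simp
    rw [hdiag, Finset.sum_congr rfl hoff, ← Finset.mul_sum, ← Finset.mul_sum]
    ring
  · exact (Finset.sum_congr rfl fun j _ => by rw [hderiv j, mul_comm]).symm
  · intro k
    have h : ∀ l ∈ Finset.univ, HasFDerivAt (fun y : Fin d → ℝ => Real.log (y l))
        ((x l)⁻¹ • (ContinuousLinearMap.proj l : (Fin d → ℝ) →L[ℝ] ℝ)) x := fun l _ =>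
      by exact (Real.hasDerivAt_log (hx l).ne').comp_hasFDerivAt x (hasFDerivAt_apply (𝕜 := ℝ) l x)
    have H := (HasFDerivAt.fun_sum h).const_mul (A + C)
    rw [H.fderiv]
    simp only [ContinuousLinearMap.smul_apply, ContinuousLinearMap.sum_apply,
      ContinuousLinearMap.proj_apply, smul_eq_mul]
    rw [Finset.sum_eq_single k (fun b _ hb => by rw [Pi.single_eq_of_ne hb]; simp)
      (by simp), Pi.single_eq_same]
    field_simp
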